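/- Assume α_T = ∑_t ℓ_{0,t} > 0. Then the charging unit price λ_e is strictly increasing on (0, ∞) if and only if its (right) derivative at 0 satisfies λ_e′(0) ≥ 0. -/

import Mathlib

open Finset

/-- Total electricity cost of a charging profile `ℓe` over time slots `1,…,T`,
with cost functions `f_t(ℓ) = η_t ℓ^n`. -/
noncomputable def chargCost (T : ℕ) (n : ℝ) (η ℓ0 ℓe : ℕ → ℝ) : ℝ :=
  ∑ t ∈ Finset.Icc 1 T, η t * (ℓ0 t + ℓe t) ^ n

/-- Feasibility of a charging profile: nonnegative, and summing to the charging need `Le`. -/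
def ChargFeasible (T : ℕ) (Le : ℝ) (ℓe : ℕ → ℝ) : Prop :=
  (∀ t ∈ Finset.Icc 1 T, 0 ≤ ℓe t) ∧ ∑ t ∈ Finset.Icc 1 T, ℓe t = Le

/-- Optimal charging cost `V(L_e)`. -/
noncomputable def Vopt (T : ℕ) (n : ℝ) (η ℓ0 : ℕ → ℝ) (Le : ℝ) : ℝ :=
  sInf {c | ∃ ℓe, ChargFeasible T Le ℓe ∧ chargCost T n η ℓ0 ℓe = c}

/-- Cumulative nonflexible load `α_t = ∑_{s=1}^t ℓ_{0,s}`. -/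
noncomputable def alphaC (ℓ0 : ℕ → ℝ) (t : ℕ) : ℝ := ∑ s ∈ Finset.Icc 1 t, ℓ0 s

/-- Cost of the nonflexible load after time `t`: `β_t = ∑_{s=t+1}^T f_s(ℓ_{0,s})`. -/
noncomputable def betaC (T : ℕ) (n : ℝ) (η ℓ0 : ℕ → ℝ) (t : ℕ) : ℝ :=
  ∑ s ∈ Finset.Icc (t + 1) T, η s * ℓ0 s ^ n

/-- Energy thresholds `L_e^{(t)}` (for `0 ≤ t ≤ T-1`, with `L_e^{(0)} = 0`). -/
noncomputable def Lth (n : ℝ) (η ℓ0 : ℕ → ℝ) (t : ℕ) : ℝ :=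
  if t = 0 then 0
  else (∑ s ∈ Finset.Icc 1 t, (η (t + 1) / η s) ^ (1 / (n - 1))) * ℓ0 (t + 1) - alphaC ℓ0 t

/-- Charging unit price `λ_e(L_e) = V(L_e) / (L_e + α_T)`. -/
noncomputable def lamE (T : ℕ) (n : ℝ) (η ℓ0 : ℕ → ℝ) (Le : ℝ) : ℝ :=
  Vopt T n η ℓ0 Le / (Le + alphaC ℓ0 T)

section Aux

variable (T : ℕ) (n : ℝ) (η ℓ0 : ℕ → ℝ)

lemma chargCost_nonneg (hη : ∀ t ∈ Finset.Icc 1 T, 0 < η t)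
    (hℓ0 : ∀ t ∈ Finset.Icc 1 T, 0 ≤ ℓ0 t) {Le : ℝ} {m : ℕ → ℝ}
    (hm : ChargFeasible T Le m) : 0 ≤ chargCost T n η ℓ0 m := by
  apply Finset.sum_nonneg
  intro t ht
  exact mul_nonneg (hη t ht).le
    (Real.rpow_nonneg (add_nonneg (hℓ0 t ht) (hm.1 t ht)) n)

lemma Vopt_le (hη : ∀ t ∈ Finset.Icc 1 T, 0 < η t)
    (hℓ0 : ∀ t ∈ Finset.Icc 1 T, 0 ≤ ℓ0 t) {Le : ℝ} {m : ℕ → ℝ}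
    (hm : ChargFeasible T Le m) :
    Vopt T n η ℓ0 Le ≤ chargCost T n η ℓ0 m := by
  apply csInf_le
  · refine ⟨0, ?_⟩
    rintro c ⟨me, hme, rfl⟩
    exact chargCost_nonneg T n η ℓ0 hη hℓ0 hme
  · exact ⟨m, hm, rfl⟩

lemma Vopt_attained (hT : 1 ≤ T) (hn : (2:ℝ) ≤ n)
    (hη : ∀ t ∈ Finset.Icc 1 T, 0 < η t)
    (hℓ0 : ∀ t ∈ Finset.Icc 1 T, 0 ≤ ℓ0 t) {Le : ℝ} (hLe : 0 ≤ Le) :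
    ∃ m, ChargFeasible T Le m ∧ chargCost T n η ℓ0 m = Vopt T n η ℓ0 Le := by
  set K : Set (ℕ → ℝ) :=
    (Set.pi Set.univ fun t => if t ∈ Finset.Icc 1 T then Set.Icc 0 Le else ({0} : Set ℝ)) ∩
      {x | ∑ t ∈ Finset.Icc 1 T, x t = Le} with hK
  have hKc : IsCompact K := by
    apply IsCompact.inter_right
    · exact isCompact_univ_pi fun t => by
        split_ifs
        · exact isCompact_Icc
        · exact isCompact_singleton
    · exact isClosed_eq (continuous_finset_sum _ fun t _ => continuous_apply t) continuous_const
  have h1T : (1:ℕ) ∈ Finset.Icc 1 T := by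
    simp [Finset.mem_Icc, hT]
  have hKne : K.Nonempty := by
    refine ⟨fun t => if t = 1 then Le else 0, ?_, ?_⟩
    · intro t _
      by_cases h : t ∈ Finset.Icc 1 T
      · simp only [if_pos h]
        by_cases h1 : t = 1
        · simp only [if_pos h1]
          exact Set.mem_Icc.mpr ⟨hLe, le_rfl⟩
        · simp only [if_neg h1]
          exact Set.mem_Icc.mpr ⟨le_rfl, hLe⟩
      · have h1 : t ≠ 1 := fun h1 => h (h1 ▸ h1T)
        simp only [if_neg h, if_neg h1]
        exact Set.mem_singleton 0
    · simp only [Set.mem_setOf_eq]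
      rw [Finset.sum_ite_eq' (Finset.Icc 1 T) 1 (fun _ => Le), if_pos h1T]
  have hcont : Continuous fun x : ℕ → ℝ => chargCost T n η ℓ0 x := by
    unfold chargCost
    refine continuous_finset_sum _ fun t _ => ?_
    exact continuous_const.mul ((continuous_const.add (continuous_apply t)).rpow_const
      fun x => Or.inr (by linarith))
  obtain ⟨m, hmK, hmin⟩ := hKc.exists_isMinOn hKne hcont.continuousOn
  have hfeas : ∀ x ∈ K, ChargFeasible T Le x := by
    intro x hx
    refine ⟨fun t ht => ?_, hx.2⟩
    have := hx.1 t (Set.mem_univ t)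
    simp only [if_pos ht] at this
    exact this.1
  have hzero : ∀ m', ChargFeasible T Le m' →
      ∃ y ∈ K, chargCost T n η ℓ0 y = chargCost T n η ℓ0 m' := by
    intro m' hm'
    refine ⟨fun t => if t ∈ Finset.Icc 1 T then m' t else 0, ⟨?_, ?_⟩, ?_⟩
    · intro t _
      by_cases h : t ∈ Finset.Icc 1 T
      · simp only [if_pos h]
        refine Set.mem_Icc.mpr ⟨hm'.1 t h, ?_⟩
        rw [← hm'.2]
        exact Finset.single_le_sum (fun s hs => hm'.1 s hs) h
      · simp only [if_neg h]
        exact Set.mem_singleton 0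
    · simp only [Set.mem_setOf_eq]
      rw [Finset.sum_congr rfl fun t ht => if_pos ht]
      exact hm'.2
    · unfold chargCost
      refine Finset.sum_congr rfl fun t ht => ?_
      simp only [if_pos ht]
  refine ⟨m, hfeas m hmK, le_antisymm ?_ (Vopt_le T n η ℓ0 hη hℓ0 (hfeas m hmK))⟩
  refine le_csInf ⟨chargCost T n η ℓ0 m, m, hfeas m hmK, rfl⟩ ?_
  rintro c ⟨m', hm', rfl⟩
  obtain ⟨y, hyK, hy⟩ := hzero m' hm'
  calc chargCost T n η ℓ0 m ≤ chargCost T n η ℓ0 y := hmin hyK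
    _ = chargCost T n η ℓ0 m' := hy

lemma Vopt_combo (hT : 1 ≤ T) (hn : (2:ℝ) ≤ n)
    (hη : ∀ t ∈ Finset.Icc 1 T, 0 < η t)
    (hℓ0 : ∀ t ∈ Finset.Icc 1 T, 0 ≤ ℓ0 t) {a b θ φ : ℝ}
    (ha : 0 ≤ a) (hb : 0 ≤ b) (hθ : 0 ≤ θ) (hφ : 0 ≤ φ) (hθφ : θ + φ = 1) :
    Vopt T n η ℓ0 (θ * a + φ * b) ≤ θ * Vopt T n η ℓ0 a + φ * Vopt T n η ℓ0 b := by
  obtain ⟨ma, hma, heqa⟩ := Vopt_attained T n η ℓ0 hT hn hη hℓ0 ha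
  obtain ⟨mb, hmb, heqb⟩ := Vopt_attained T n η ℓ0 hT hn hη hℓ0 hb
  set mc : ℕ → ℝ := fun t => θ * ma t + φ * mb t with hmc
  have hfc : ChargFeasible T (θ * a + φ * b) mc := by
    constructor
    · intro t ht
      exact add_nonneg (mul_nonneg hθ (hma.1 t ht)) (mul_nonneg hφ (hmb.1 t ht))
    · simp only [hmc]
      rw [Finset.sum_add_distrib, ← Finset.mul_sum, ← Finset.mul_sum, hma.2, hmb.2]
  have hcost : chargCost T n η ℓ0 mc
      ≤ θ * chargCost T n η ℓ0 ma + φ * chargCost T n η ℓ0 mb := by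
    unfold chargCost
    rw [Finset.mul_sum, Finset.mul_sum, ← Finset.sum_add_distrib]
    refine Finset.sum_le_sum fun t ht => ?_
    have hx : (0:ℝ) ≤ ℓ0 t + ma t := add_nonneg (hℓ0 t ht) (hma.1 t ht)
    have hy : (0:ℝ) ≤ ℓ0 t + mb t := add_nonneg (hℓ0 t ht) (hmb.1 t ht)
    have hcv := (convexOn_rpow (p := n) (by linarith)).2
      (Set.mem_Ici.mpr hx) (Set.mem_Ici.mpr hy) hθ hφ hθφ
    simp only [smul_eq_mul] at hcv
    have hbase : ℓ0 t + mc t = θ * (ℓ0 t + ma t) + φ * (ℓ0 t + mb t) := by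
      simp only [hmc]
      linear_combination (ℓ0 t) * hθφ.symm
    rw [hbase]
    calc η t * (θ * (ℓ0 t + ma t) + φ * (ℓ0 t + mb t)) ^ n
        ≤ η t * (θ * (ℓ0 t + ma t) ^ n + φ * (ℓ0 t + mb t) ^ n) :=
          mul_le_mul_of_nonneg_left hcv (hη t ht).le
      _ = θ * (η t * (ℓ0 t + ma t) ^ n) + φ * (η t * (ℓ0 t + mb t) ^ n) := by ring
  calc Vopt T n η ℓ0 (θ * a + φ * b) ≤ chargCost T n η ℓ0 mc :=
        Vopt_le T n η ℓ0 hη hℓ0 hfc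
    _ ≤ θ * chargCost T n η ℓ0 ma + φ * chargCost T n η ℓ0 mb := hcost
    _ = θ * Vopt T n η ℓ0 a + φ * Vopt T n η ℓ0 b := by rw [heqa, heqb]

/-- Cleared-denominator chord inequality for `V`. -/
lemma Vopt_chord (hT : 1 ≤ T) (hn : (2:ℝ) ≤ n)
    (hη : ∀ t ∈ Finset.Icc 1 T, 0 < η t)
    (hℓ0 : ∀ t ∈ Finset.Icc 1 T, 0 ≤ ℓ0 t) {z m : ℝ}
    (hz : 0 ≤ z) (hzm : z ≤ m) (hm : 0 < m) :
    m * Vopt T n η ℓ0 z ≤ (m - z) * Vopt T n η ℓ0 0 + z * Vopt T n η ℓ0 m := by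
  have h := Vopt_combo T n η ℓ0 hT hn hη hℓ0 (a := 0) (b := m)
    (θ := (m - z)/m) (φ := z/m) le_rfl hm.le
    (div_nonneg (by linarith) hm.le) (div_nonneg hz hm.le) (by field_simp; ring)
  have harg : (m - z)/m * 0 + z/m * m = z := by field_simp; ring
  rw [harg] at h
  have h2 := mul_le_mul_of_nonneg_left h hm.le
  calc m * Vopt T n η ℓ0 z ≤ m * ((m - z)/m * Vopt T n η ℓ0 0 + z/m * Vopt T n η ℓ0 m) := h2
    _ = (m - z) * Vopt T n η ℓ0 0 + z * Vopt T n η ℓ0 m := by field_simp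

/-- Strict midpoint convexity of `V`. -/
lemma Vopt_strict_mid (hT : 1 ≤ T) (hn : (2:ℝ) ≤ n)
    (hη : ∀ t ∈ Finset.Icc 1 T, 0 < η t)
    (hℓ0 : ∀ t ∈ Finset.Icc 1 T, 0 ≤ ℓ0 t) {a b : ℝ}
    (ha : 0 ≤ a) (hb : 0 ≤ b) (hab : a ≠ b) :
    Vopt T n η ℓ0 ((a + b)/2) < (Vopt T n η ℓ0 a + Vopt T n η ℓ0 b)/2 := by
  obtain ⟨ma, hma, heqa⟩ := Vopt_attained T n η ℓ0 hT hn hη hℓ0 ha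
  obtain ⟨mb, hmb, heqb⟩ := Vopt_attained T n η ℓ0 hT hn hη hℓ0 hb
  set mc : ℕ → ℝ := fun t => (ma t + mb t)/2 with hmc
  have hfc : ChargFeasible T ((a + b)/2) mc := by
    constructor
    · intro t ht
      have := add_nonneg (hma.1 t ht) (hmb.1 t ht)
      simp only [hmc]
      linarith
    · simp only [hmc]
      rw [← Finset.sum_div, Finset.sum_add_distrib, hma.2, hmb.2]
  have hdiff : ∃ t ∈ Finset.Icc 1 T, ma t ≠ mb t := by
    by_contra h
    push_neg at h
    exact hab (by rw [← hma.2, ← hmb.2]; exact Finset.sum_congr rfl h)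
  obtain ⟨t0, ht0, ht0ne⟩ := hdiff
  have hcost : chargCost T n η ℓ0 mc
      < (chargCost T n η ℓ0 ma + chargCost T n η ℓ0 mb)/2 := by
    unfold chargCost
    rw [← Finset.sum_add_distrib, Finset.sum_div]
    refine Finset.sum_lt_sum (fun t ht => ?_) ⟨t0, ht0, ?_⟩
    · have hx : (0:ℝ) ≤ ℓ0 t + ma t := add_nonneg (hℓ0 t ht) (hma.1 t ht)
      have hy : (0:ℝ) ≤ ℓ0 t + mb t := add_nonneg (hℓ0 t ht) (hmb.1 t ht)
      have hcv := (convexOn_rpow (p := n) (by linarith)).2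
        (Set.mem_Ici.mpr hx) (Set.mem_Ici.mpr hy)
        (by norm_num : (0:ℝ) ≤ 1/2) (by norm_num : (0:ℝ) ≤ 1/2) (by norm_num)
      simp only [smul_eq_mul] at hcv
      have hbase : ℓ0 t + mc t = 1/2 * (ℓ0 t + ma t) + 1/2 * (ℓ0 t + mb t) := by
        simp only [hmc]; ring
      rw [hbase]
      calc η t * (1/2 * (ℓ0 t + ma t) + 1/2 * (ℓ0 t + mb t)) ^ n
          ≤ η t * (1/2 * (ℓ0 t + ma t) ^ n + 1/2 * (ℓ0 t + mb t) ^ n) :=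
            mul_le_mul_of_nonneg_left hcv (hη t ht).le
        _ = (η t * (ℓ0 t + ma t) ^ n + η t * (ℓ0 t + mb t) ^ n)/2 := by ring
    · have hx : (0:ℝ) ≤ ℓ0 t0 + ma t0 := add_nonneg (hℓ0 t0 ht0) (hma.1 t0 ht0)
      have hy : (0:ℝ) ≤ ℓ0 t0 + mb t0 := add_nonneg (hℓ0 t0 ht0) (hmb.1 t0 ht0)
      have hne : ℓ0 t0 + ma t0 ≠ ℓ0 t0 + mb t0 := by
        intro h; exact ht0ne (by linarith)
      have hcv := (strictConvexOn_rpow (p := n) (by linarith)).2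
        (Set.mem_Ici.mpr hx) (Set.mem_Ici.mpr hy) hne
        (by norm_num : (0:ℝ) < 1/2) (by norm_num : (0:ℝ) < 1/2) (by norm_num)
      simp only [smul_eq_mul] at hcv
      have hbase : ℓ0 t0 + mc t0 = 1/2 * (ℓ0 t0 + ma t0) + 1/2 * (ℓ0 t0 + mb t0) := by
        simp only [hmc]; ring
      rw [hbase]
      calc η t0 * (1/2 * (ℓ0 t0 + ma t0) + 1/2 * (ℓ0 t0 + mb t0)) ^ n
          < η t0 * (1/2 * (ℓ0 t0 + ma t0) ^ n + 1/2 * (ℓ0 t0 + mb t0) ^ n) :=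
            mul_lt_mul_of_pos_left hcv (hη t0 ht0)
        _ = (η t0 * (ℓ0 t0 + ma t0) ^ n + η t0 * (ℓ0 t0 + mb t0) ^ n)/2 := by ring
  calc Vopt T n η ℓ0 ((a + b)/2) ≤ chargCost T n η ℓ0 mc :=
        Vopt_le T n η ℓ0 hη hℓ0 hfc
    _ < (chargCost T n η ℓ0 ma + chargCost T n η ℓ0 mb)/2 := hcost
    _ = (Vopt T n η ℓ0 a + Vopt T n η ℓ0 b)/2 := by rw [heqa, heqb]

end Aux

/-- if `α_T > 0`, the charging unit price `λ_e` is strictly increasing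
on `(0, ∞)` if and only if its right derivative at `0` is nonnegative. -/
theorem lamE_strictMono_iff_deriv_at_zero_nonneg
    (T : ℕ) (n : ℝ) (η ℓ0 : ℕ → ℝ)
    (hT : 2 ≤ T) (hn : (2 : ℝ) ≤ n)
    (hη : ∀ t ∈ Finset.Icc 1 T, 0 < η t)
    (hℓ0 : ∀ t ∈ Finset.Icc 1 T, 0 ≤ ℓ0 t)
    (hord : ∀ s t : ℕ, 1 ≤ s → s ≤ t → t ≤ T →
      η s * ℓ0 s ^ (n - 1) ≤ η t * ℓ0 t ^ (n - 1))
    (hα : 0 < alphaC ℓ0 T)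
    (d : ℝ) (hd : HasDerivWithinAt (lamE T n η ℓ0) d (Set.Ici 0) 0) :
    StrictMonoOn (lamE T n η ℓ0) (Set.Ioi 0) ↔ 0 ≤ d := by
  have hT1 : 1 ≤ T := le_trans (by norm_num) hT
  set V := Vopt T n η ℓ0 with hVdef
  set α := alphaC ℓ0 T with hαdef
  set lam := lamE T n η ℓ0 with hlamdef
  constructor
  · -- strict monotone ⇒ 0 ≤ d
    intro hmono
    have hdslope : Filter.Tendsto (slope lam 0) (nhdsWithin 0 (Set.Ioi 0)) (nhds d) := by
      have := hasDerivWithinAt_iff_tendsto_slope.mp hd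
      rwa [Set.Ici_sdiff_left] at this
    have key : ∀ z ∈ Set.Ioi (0:ℝ), lam 0 ≤ lam z := by
      intro z hz
      have hc : Filter.Tendsto lam (nhdsWithin 0 (Set.Ioi 0)) (nhds (lam 0)) :=
        hd.continuousWithinAt.mono_left (nhdsWithin_mono _ Set.Ioi_subset_Ici_self)
      refine le_of_tendsto hc ?_
      have hev : ∀ᶠ w in nhdsWithin 0 (Set.Ioi (0:ℝ)), w < z :=
        (eventually_lt_nhds hz).filter_mono nhdsWithin_le_nhds
      filter_upwards [self_mem_nhdsWithin, hev] with w hw hwz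
      exact (hmono hw hz hwz).le
    refine ge_of_tendsto hdslope ?_
    filter_upwards [self_mem_nhdsWithin] with w hw
    have hw0 : (0:ℝ) < w := hw
    rw [slope_def_field, sub_zero]
    exact div_nonneg (by linarith [key w hw]) hw0.le
  · -- 0 ≤ d ⇒ strict monotone
    intro hd0
    -- derivative of V at 0 from the right
    set p : ℝ := d * (0 + α) + lam 0 * 1 with hpdef
    have hVd : HasDerivWithinAt V p (Set.Ici 0) 0 := by
      have h1 : HasDerivWithinAt (fun L : ℝ => L + α) 1 (Set.Ici 0) 0 :=
        ((hasDerivAt_id (0:ℝ)).add_const α).hasDerivWithinAt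
      have h2 := hd.mul h1
      refine h2.congr (fun y hy => ?_) ?_
      · have hy0 : (0:ℝ) < y + α := by
          have : (0:ℝ) ≤ y := hy
          linarith
        show V y = lam y * (y + α)
        rw [hlamdef, lamE, ← hαdef, ← hVdef]
        exact (div_mul_cancel₀ _ hy0.ne').symm
      · show V 0 = lam 0 * (0 + α)
        rw [hlamdef, lamE, ← hαdef, ← hVdef]
        exact (div_mul_cancel₀ _ (by linarith : (0:ℝ) + α ≠ 0)).symm
    have hVslope : Filter.Tendsto (slope V 0) (nhdsWithin 0 (Set.Ioi 0)) (nhds p) := by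
      have := hasDerivWithinAt_iff_tendsto_slope.mp hVd
      rwa [Set.Ici_sdiff_left] at this
    -- p is below all secant slopes from 0
    have hp_le : ∀ m : ℝ, 0 < m → p ≤ (V m - V 0)/m := by
      intro m hm
      refine le_of_tendsto hVslope ?_
      have hev : ∀ᶠ w in nhdsWithin 0 (Set.Ioi (0:ℝ)), w < m :=
        (eventually_lt_nhds hm).filter_mono nhdsWithin_le_nhds
      filter_upwards [self_mem_nhdsWithin, hev] with w hw hwm
      have hw0 : (0:ℝ) < w := hw
      have hchord := Vopt_chord T n η ℓ0 hT1 hn hη hℓ0 hw0.le hwm.le hm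
      rw [slope_def_field, sub_zero, div_le_div_iff₀ hw0 hm]
      rw [← hVdef] at hchord
      nlinarith [hchord]
    -- strict slope inequality via strict midpoint convexity
    have hp_lt : ∀ y : ℝ, 0 < y → p * y < V y - V 0 := by
      intro y hy
      have h1 := hp_le (y/2) (by linarith)
      have h2 := Vopt_strict_mid T n η ℓ0 hT1 hn hη hℓ0
        (a := 0) (b := y) le_rfl hy.le (by linarith)
      rw [← hVdef] at h2
      rw [zero_add] at h2
      rw [le_div_iff₀ (by linarith : (0:ℝ) < y/2)] at h1
      nlinarith
    -- V 0 ≤ α * p from 0 ≤ d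
    have hdp : V 0 ≤ α * p := by
      have hlam0 : lam 0 = V 0 / α := by
        rw [hlamdef, lamE, ← hαdef, ← hVdef, zero_add]
      have hap : α * p = d * α^2 + V 0 := by
        rw [hpdef, hlam0]
        field_simp
        ring
      nlinarith [sq_nonneg α]
    -- conclude strict monotonicity
    intro x hx y hy hxy
    have hx0 : (0:ℝ) < x := hx
    have hy0 : (0:ℝ) < y := hy
    have hchord := Vopt_chord T n η ℓ0 hT1 hn hη hℓ0 hx0.le hxy.le hy0
    rw [← hVdef] at hchord
    have hpy := hp_lt y hy0
    -- V 0 * (y + α) < α * V y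
    have h3 : V 0 * (y + α) < α * V y := by nlinarith
    show lam x < lam y
    rw [hlamdef, lamE, lamE, ← hαdef, ← hVdef]
    rw [div_lt_div_iff₀ (by linarith) (by linarith)]
    have e2 : (y - x) * (V 0 * (y + α)) < (y - x) * (α * V y) :=
      mul_lt_mul_of_pos_left h3 (by linarith)
    have e3 : y * (V x * (y + α)) < y * (V y * (x + α)) := by nlinarith [hchord, e2]
    exact lt_of_mul_lt_mul_left e3 hy0.le
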